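/- Let p = ef+1 be an odd prime with f even, v = gcd((p−1)/ord_p(2), f), and 2 ≡ g^u (mod p). If v = f, then H_k^{(p)}(α_1) + H_{k+u}^{(p)}(α_1) = 0 for all k ∈ Z/fZ; and if v divides f/2, or v = 2 with v ≠ f, then H_k^{(p)}(α_1) + H_{k+u}^{(p)}(α_1) ≠ 0 for all k ∈ Z/fZ. -/
import Mathlib


open Polynomial Finset
set_option linter.unusedSectionVars false
set_option maxHeartbeats 1000000

noncomputable section

/-- Generalized cyclotomic class `D_i` of order `d` modulo `m`,
    given by the coset `g^i ⟨g^d⟩` with `e` elements. -/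
def Dset (m g d e i : ℕ) : Finset (ZMod m) :=
  (Finset.range e).image (fun t => (g : ZMod m) ^ (i + t * d))

/-- `E_i^{(m)}` evaluated at `α`. -/
def Esum {F : Type*} [Field F] (m g d e i : ℕ) (α : F) : F :=
  ∑ t ∈ Dset m g d e i, α ^ t.val

/-- `H_k^{(p^j)}` evaluated at `α`. -/
def Hsum {F : Type*} [Field F] (p g e f j k : ℕ) (α : F) : F :=
  ∑ i ∈ Finset.range (p ^ (j - 1) * f / 2),
    Esum (p ^ j) g (p ^ (j - 1) * f) e ((i + k) % (p ^ (j - 1) * f)) α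

/-- `T_k^{(p^m)}` evaluated at `α`. -/
def Tsum {F : Type*} [Field F] (p g e f m k : ℕ) (α : F) : F :=
  ∑ j ∈ Finset.Icc 1 m, Hsum p g e f j k (α ^ p ^ (m - j))

/-- The set `C_1^{(2p^n)}`. -/
def Cone (p g e f b n : ℕ) : Finset (ZMod (2 * p ^ n)) :=
  insert 0 <| (Finset.Icc 1 n).biUnion fun j =>
    (Finset.range (p ^ (j - 1) * f / 2)).biUnion fun i =>
      (Dset (2 * p ^ j) g (p ^ (j - 1) * f) e ((i + b) % (p ^ (j - 1) * f))).image
          (fun x => ((p ^ (n - j) * x.val : ℕ) : ZMod (2 * p ^ n))) ∪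
      (Dset (2 * p ^ j) g (p ^ (j - 1) * f) e ((i + b) % (p ^ (j - 1) * f))).image
          (fun x => ((2 * p ^ (n - j) * x.val : ℕ) : ZMod (2 * p ^ n)))

/-- The set `C_0^{(2p^n)}`. -/
def Czero (p g e f b n : ℕ) : Finset (ZMod (2 * p ^ n)) :=
  insert ((p ^ n : ℕ) : ZMod (2 * p ^ n)) <| (Finset.Icc 1 n).biUnion fun j =>
    (Finset.Ico (p ^ (j - 1) * f / 2) (p ^ (j - 1) * f)).biUnion fun i =>
      (Dset (2 * p ^ j) g (p ^ (j - 1) * f) e ((i + b) % (p ^ (j - 1) * f))).image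
          (fun x => ((p ^ (n - j) * x.val : ℕ) : ZMod (2 * p ^ n))) ∪
      (Dset (2 * p ^ j) g (p ^ (j - 1) * f) e ((i + b) % (p ^ (j - 1) * f))).image
          (fun x => ((2 * p ^ (n - j) * x.val : ℕ) : ZMod (2 * p ^ n)))

/-- The set `C̃_1^{(2p^n)}`. -/
def Ctilde1 (p g e f b n : ℕ) : Finset (ZMod (2 * p ^ n)) :=
  insert 0 <| (Finset.Icc 1 n).biUnion fun j =>
    ((Finset.range (p ^ (j - 1) * f / 2)).biUnion fun i =>
      (Dset (2 * p ^ j) g (p ^ (j - 1) * f) e ((i + b) % (p ^ (j - 1) * f))).image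
          (fun x => ((p ^ (n - j) * x.val : ℕ) : ZMod (2 * p ^ n)))) ∪
    ((Finset.Ico (p ^ (j - 1) * f / 2) (p ^ (j - 1) * f)).biUnion fun i =>
      (Dset (2 * p ^ j) g (p ^ (j - 1) * f) e ((i + b) % (p ^ (j - 1) * f))).image
          (fun x => ((2 * p ^ (n - j) * x.val : ℕ) : ZMod (2 * p ^ n))))

/-- Evaluation of the generating polynomial `S` of `s^∞` at `α`. -/
def Seval {F : Type*} [Field F] (p g e f b n : ℕ) (α : F) : F :=
  ∑ t ∈ Cone p g e f b n, α ^ t.val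

/-- Evaluation of the generating polynomial `S̃` of `s̃^∞` at `α`. -/
def Steval {F : Type*} [Field F] (p g e f b n : ℕ) (α : F) : F :=
  ∑ t ∈ Ctilde1 p g e f b n, α ^ t.val

/-- The binary sequence `s^∞` of period `2p^n`. -/
def seqS (p g e f b n : ℕ) : ℕ → ZMod 2 :=
  fun i => if (i : ZMod (2 * p ^ n)) ∈ Cone p g e f b n then 1 else 0

/-- The binary sequence `s̃^∞` of period `2p^n`. -/
def seqStilde (p g e f b n : ℕ) : ℕ → ZMod 2 :=
  fun i => if (i : ZMod (2 * p ^ n)) ∈ Ctilde1 p g e f b n then 1 else 0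

/-- Generating polynomial of one period of a binary sequence. -/
def genPoly (N : ℕ) (s : ℕ → ZMod 2) : Polynomial (ZMod 2) :=
  ∑ k ∈ Finset.range N, Polynomial.C (s k) * Polynomial.X ^ k

/-- Linear complexity: the length of a shortest linear recurrence generating `s`. -/
def linComplexity (s : ℕ → ZMod 2) : ℕ :=
  sInf {L | ∃ c : Fin L → ZMod 2, ∀ n, s (n + L) = ∑ i : Fin L, c i * s (n + i)}

section Aux
variable {p e f g : ℕ} (hp : p.Prime) (hpef : p = e * f + 1) (he : 0 < e) (hf : 0 < f)
  (hg : orderOf (g : ZMod p) = Nat.totient p)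

include hp hpef hg in
lemma ord_g : orderOf (g : ZMod p) = e * f := by
  rw [hg, Nat.totient_prime hp, hpef]; omega

include hp hpef hg in
lemma g_ne_zero : (g : ZMod p) ≠ 0 := by
  haveI : Fact p.Prime := ⟨hp⟩
  have hef : 0 < e * f := by nlinarith [hp.two_le]
  have h1 : (g : ZMod p) ^ (e*f) = 1 := by
    rw [← ord_g hp hpef hg]; exact pow_orderOf_eq_one _
  intro h
  rw [h, zero_pow hef.ne'] at h1
  exact zero_ne_one h1

include hp hpef hg in
lemma powInj {a b : ℕ} : (g : ZMod p) ^ a = (g : ZMod p) ^ b ↔ a ≡ b [MOD e * f] := by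
  haveI : Fact p.Prime := ⟨hp⟩
  have hu : IsUnit (g : ZMod p) := (g_ne_zero hp hpef hg).isUnit
  have hord : orderOf hu.unit = e * f := by
    rw [← orderOf_units, hu.unit_spec, ord_g hp hpef hg]
  constructor
  · intro h
    have : hu.unit ^ a = hu.unit ^ b := by
      ext; simp only [Units.val_pow_eq_pow_val, hu.unit_spec, h]
    rw [pow_eq_pow_iff_modEq, hord] at this; exact this
  · intro h
    have : hu.unit ^ a = hu.unit ^ b := by rw [pow_eq_pow_iff_modEq, hord]; exact h
    calc (g : ZMod p) ^ a = ((hu.unit ^ a : (ZMod p)ˣ) : ZMod p) := by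
          simp [hu.unit_spec]
    _ = ((hu.unit ^ b : (ZMod p)ˣ) : ZMod p) := by rw [this]
    _ = (g : ZMod p) ^ b := by simp [hu.unit_spec]

include hp hpef he hf hg in
lemma Dset_add_f (j : ℕ) : Dset p g f e (j + f) = Dset p g f e j := by
  obtain ⟨e', rfl⟩ : ∃ e', e = e' + 1 := ⟨e - 1, by omega⟩
  ext x
  simp only [Dset, mem_image, mem_range]
  constructor
  · rintro ⟨t, ht, rfl⟩
    refine ⟨(t + 1) % (e' + 1), Nat.mod_lt _ (by omega), ?_⟩
    rw [powInj hp hpef hg]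
    calc j + (t+1) % (e'+1) * f ≡ j + (t+1) * f [MOD (e'+1)*f] :=
          Nat.ModEq.add_left j ((Nat.mod_modEq (t+1) (e'+1)).mul_right' f)
    _ = j + f + t * f := by ring
  · rintro ⟨t, ht, rfl⟩
    refine ⟨(t + e') % (e' + 1), Nat.mod_lt _ (by omega), ?_⟩
    rw [powInj hp hpef hg]
    calc j + f + (t + e') % (e'+1) * f ≡ j + f + (t + e') * f [MOD (e'+1)*f] :=
          Nat.ModEq.add_left _ ((Nat.mod_modEq (t+e') (e'+1)).mul_right' f)
    _ = j + t * f + (e'+1) * f := by ring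
    _ ≡ j + t * f [MOD (e'+1)*f] := by
          unfold Nat.ModEq; rw [Nat.add_mod_right]

include hp hpef he hf hg in
lemma Dset_add_mul (j c : ℕ) : Dset p g f e (j + c * f) = Dset p g f e j := by
  induction c with
  | zero => simp
  | succ n ih =>
      have : j + (n+1) * f = (j + n * f) + f := by ring
      rw [this, Dset_add_f hp hpef he hf hg, ih]

include hp hpef he hf hg in
lemma Dset_congr {i j : ℕ} (hij : i % f = j % f) : Dset p g f e i = Dset p g f e j := by
  have h1 : Dset p g f e i = Dset p g f e (i % f) := by
    conv_lhs => rw [← Nat.mod_add_div i f, Nat.mul_comm f (i/f)]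
    exact Dset_add_mul hp hpef he hf hg _ _
  have h2 : Dset p g f e j = Dset p g f e (j % f) := by
    conv_lhs => rw [← Nat.mod_add_div j f, Nat.mul_comm f (j/f)]
    exact Dset_add_mul hp hpef he hf hg _ _
  rw [h1, h2, hij]

include hp hpef he hf hg in
lemma mem_Dset_pow {a j : ℕ} : (g : ZMod p) ^ a ∈ Dset p g f e j ↔ a ≡ j [MOD f] := by
  constructor
  · rintro h
    simp only [Dset, mem_image, mem_range] at h
    obtain ⟨t, ht, hEq⟩ := h
    have := (powInj hp hpef hg).mp hEq
    have h2 : j + t * f ≡ a [MOD f] := this.of_dvd ⟨e, by ring⟩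
    have h3 : j + t * f ≡ j [MOD f] := by
      unfold Nat.ModEq; rw [Nat.add_mul_mod_self_right]
    exact (h2.symm.trans h3)
  · intro h
    rw [Dset_congr hp hpef he hf hg (h.symm : j % f = a % f)]
    simp only [Dset, mem_image, mem_range]
    exact ⟨0, he, by norm_num⟩


include hp hpef he hf hg in
lemma Dset_image (s j : ℕ) :
    Dset p g f e (s + j) = (Dset p g f e j).image (fun x => (g : ZMod p) ^ s * x) := by
  simp only [Dset, Finset.image_image]
  apply Finset.image_congr
  intro t _
  show (g : ZMod p) ^ (s + j + t * f) = (g : ZMod p) ^ s * (g : ZMod p) ^ (j + t * f)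
  rw [← pow_add]; ring_nf

include hp hpef he hf hg in
lemma pow_injOn_range {j : ℕ} : ∀ t ∈ Finset.range e, ∀ s ∈ Finset.range e,
    (g : ZMod p) ^ (j + t * f) = (g : ZMod p) ^ (j + s * f) → t = s := by
  intro t ht s hs hEq
  simp only [mem_range] at ht hs
  have h1 := (powInj hp hpef hg).mp hEq
  have h2 : t * f ≡ s * f [MOD e * f] := (Nat.ModEq.add_left_cancel' j h1)
  have h3 : t ≡ s [MOD e] := Nat.ModEq.mul_right_cancel' hf.ne' h2
  unfold Nat.ModEq at h3
  rwa [Nat.mod_eq_of_lt ht, Nat.mod_eq_of_lt hs] at h3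

variable {F : Type*} [Field F]

include hp hpef he hf hg in
lemma Esum_range (j : ℕ) (α : F) :
    Esum p g f e j α = ∑ t ∈ Finset.range e, α ^ (((g : ZMod p) ^ (j + t * f)).val) := by
  unfold Esum Dset
  exact Finset.sum_image (pow_injOn_range hp hpef he hf hg)

include hp hpef he hf hg in
lemma Esum_congr {i j : ℕ} (hij : i % f = j % f) (α : F) :
    Esum p g f e i α = Esum p g f e j α := by
  unfold Esum; rw [Dset_congr hp hpef he hf hg hij]

include hp hpef he hf hg in
lemma card_Dset (j : ℕ) : (Dset p g f e j).card = e := by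
  unfold Dset
  rw [Finset.card_image_of_injOn, Finset.card_range]
  intro t ht s hs h
  exact pow_injOn_range hp hpef he hf hg t ht s hs h

include hp hpef hg in
lemma gsurj : ∀ x : ZMod p, x ≠ 0 → ∃ s : ℕ, x = (g : ZMod p) ^ s := by
  haveI : Fact p.Prime := ⟨hp⟩
  intro x hx
  have hxu : IsUnit x := hx.isUnit
  have hgu : IsUnit (g : ZMod p) := (g_ne_zero hp hpef hg).isUnit
  have hord : orderOf hgu.unit = Fintype.card (ZMod p)ˣ := by
    rw [← orderOf_units, hgu.unit_spec, hg, ZMod.card_units_eq_totient]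
  have htop : Subgroup.zpowers hgu.unit = ⊤ := by
    apply Subgroup.eq_top_of_card_eq
    rw [Nat.card_zpowers, hord, Nat.card_eq_fintype_card]
  have : hxu.unit ∈ Subgroup.zpowers hgu.unit := htop ▸ Subgroup.mem_top _
  rw [← mem_powers_iff_mem_zpowers] at this
  obtain ⟨s, hs⟩ := this
  have hs' : hgu.unit ^ s = hxu.unit := hs
  refine ⟨s, ?_⟩
  calc x = ((hgu.unit ^ s : (ZMod p)ˣ) : ZMod p) := by rw [hs', hxu.unit_spec]
  _ = (g : ZMod p) ^ s := by simp [hgu.unit_spec]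

include hp hpef he hf hg in
lemma Dset_disjoint {a b : ℕ} (ha : a < f) (hb : b < f) (hab : a ≠ b) :
    Disjoint (Dset p g f e a) (Dset p g f e b) := by
  rw [Finset.disjoint_left]
  intro x hxa hxb
  simp only [Dset, mem_image, mem_range] at hxa
  obtain ⟨t, ht, rfl⟩ := hxa
  have h1 : a + t * f ≡ b [MOD f] := (mem_Dset_pow hp hpef he hf hg).mp hxb
  have h2 : (a + t * f) % f = a % f := Nat.add_mul_mod_self_right a t f
  unfold Nat.ModEq at h1
  rw [h2, Nat.mod_eq_of_lt ha, Nat.mod_eq_of_lt hb] at h1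
  exact hab h1


variable {α : F} (hα : IsPrimitiveRoot α p)

include hα in
lemma root_pow_mod (a : ℕ) : α ^ a = α ^ (a % p) := by
  conv_lhs => rw [← Nat.mod_add_div a p, pow_add, pow_mul, hα.pow_eq_one, one_pow, mul_one]

include hα in
lemma root_pow_modEq {a b : ℕ} (h : a ≡ b [MOD p]) : α ^ a = α ^ b := by
  rw [root_pow_mod hα a, root_pow_mod hα b, h]

include hp hα in
lemma root_pow_val_mul (x y : ZMod p) : α ^ ((x * y).val) = α ^ (x.val * y.val) := by
  haveI : Fact p.Prime := ⟨hp⟩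
  rw [ZMod.val_mul]
  exact (root_pow_mod hα _).symm

include hp hpef he hf hg hα in
lemma total_sum [CharP F 2] : ∑ m ∈ Finset.range f, Esum p g f e m α = 1 := by
  haveI : Fact p.Prime := ⟨hp⟩
  have hp1 : 1 < p := hp.one_lt
  have hdisj : (↑(Finset.range f) : Set ℕ).PairwiseDisjoint (Dset p g f e) := by
    intro a ha b hb hab
    simp only [Finset.coe_range, Set.mem_Iio] at ha hb
    exact Dset_disjoint hp hpef he hf hg ha hb hab
  have hsum : ∑ m ∈ Finset.range f, Esum p g f e m α
      = ∑ t ∈ (Finset.range f).biUnion (Dset p g f e), α ^ t.val :=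
    (Finset.sum_biUnion hdisj).symm
  have hunion : (Finset.range f).biUnion (Dset p g f e) = Finset.univ.erase 0 := by
    ext x
    simp only [Finset.mem_biUnion, Finset.mem_range, Finset.mem_erase, Finset.mem_univ,
      and_true]
    constructor
    · rintro ⟨m, hm, hx⟩
      simp only [Dset, mem_image, mem_range] at hx
      obtain ⟨t, ht, rfl⟩ := hx
      exact pow_ne_zero _ (g_ne_zero hp hpef hg)
    · intro hx
      obtain ⟨s, rfl⟩ := gsurj hp hpef hg x hx
      exact ⟨s % f, Nat.mod_lt _ hf, (mem_Dset_pow hp hpef he hf hg).mpr (Nat.mod_modEq s f).symm⟩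
  have huniv : ∑ t ∈ (Finset.univ : Finset (ZMod p)), α ^ t.val = 0 := by
    have : ∑ t ∈ (Finset.univ : Finset (ZMod p)), α ^ t.val = ∑ a ∈ Finset.range p, α ^ a := by
      refine Finset.sum_nbij' (fun t => t.val) (fun a => (a : ZMod p)) ?_ ?_ ?_ ?_ ?_
      · intro t _; exact Finset.mem_range.mpr (ZMod.val_lt t)
      · intro a _; exact Finset.mem_univ _
      · intro t _; simp [ZMod.natCast_val, ZMod.cast_id]
      · intro a ha; exact ZMod.val_cast_of_lt (Finset.mem_range.mp ha)
      · intro t _; rfl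
    rw [this]
    exact hα.geom_sum_eq_zero hp1
  have herase : ∑ t ∈ (Finset.univ : Finset (ZMod p)).erase 0, α ^ t.val + α ^ (0 : ZMod p).val
      = ∑ t ∈ (Finset.univ : Finset (ZMod p)), α ^ t.val :=
    Finset.sum_erase_add _ _ (Finset.mem_univ 0)
  rw [hsum, hunion]
  have h0 : α ^ (0 : ZMod p).val = 1 := by rw [ZMod.val_zero, pow_zero]
  rw [huniv, h0] at herase
  have := eq_neg_of_add_eq_zero_left herase
  rwa [CharTwo.neg_eq] at this


variable {u : ℕ} (hu : (2 : ZMod p) = (g : ZMod p) ^ u) (hodd : Odd p)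

lemma addmod (a b n : ℕ) : (a + b % n) % n = (a + b) % n := by
  conv_lhs => rw [Nat.add_mod]
  conv_rhs => rw [Nat.add_mod]
  rw [Nat.mod_mod_of_dvd _ dvd_rfl]

include hp hodd in
lemma two_lt_p : 2 < p := by
  rcases hp.two_le.lt_or_eq with h | h
  · exact h
  · exfalso; rw [← h] at hodd; exact (Nat.not_odd_iff_even.mpr (by decide)) hodd

include hp hpef he hf hg hu hodd hα in
lemma Esum_frob [CharP F 2] (j : ℕ) :
    (Esum p g f e j α) ^ 2 = Esum p g f e (u + j) α := by
  haveI : Fact (Nat.Prime 2) := ⟨Nat.prime_two⟩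
  haveI : Fact p.Prime := ⟨hp⟩
  rw [Esum_range hp hpef he hf hg, Esum_range hp hpef he hf hg, sum_pow_char]
  apply Finset.sum_congr rfl
  intro t _
  have h2v : (2 : ZMod p).val = 2 := by
    have : ((2 : ℕ) : ZMod p) = (2 : ZMod p) := by norm_cast
    rw [← this, ZMod.val_cast_of_lt (two_lt_p hp hodd)]
  calc (α ^ ((g : ZMod p) ^ (j + t * f)).val) ^ 2
      = α ^ (((g : ZMod p) ^ (j + t * f)).val * 2) := (pow_mul α _ 2).symm
    _ = α ^ (((g : ZMod p) ^ (j + t * f)).val * (2 : ZMod p).val) := by rw [h2v]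
    _ = α ^ (((g : ZMod p) ^ (j + t * f) * (2 : ZMod p)).val) :=
        (root_pow_val_mul hp hα _ _).symm
    _ = α ^ (((g : ZMod p) ^ (u + j + t * f)).val) := by
        rw [hu, ← pow_add]
        congr 2
        ring

include hf in
lemma Hsum_repr (m : ℕ) :
    Hsum p g e f 1 m α = ∑ i ∈ Finset.range (f / 2), Esum p g f e ((i + m) % f) α := by
  unfold Hsum
  norm_num

include hp hpef he hf hg in
lemma Hsum_congr {m m' : ℕ} (hmm : m % f = m' % f) :
    Hsum p g e f 1 m α = Hsum p g e f 1 m' α := by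
  rw [Hsum_repr hf, Hsum_repr hf]
  apply Finset.sum_congr rfl
  intro i _
  apply Esum_congr hp hpef he hf hg
  rw [Nat.mod_mod_of_dvd _ dvd_rfl, Nat.mod_mod_of_dvd _ dvd_rfl,
    Nat.add_mod i m f, Nat.add_mod i m' f, hmm]

include hp hpef he hf hg hu hodd hα in
lemma Hsum_frob [CharP F 2] (m : ℕ) :
    (Hsum p g e f 1 m α) ^ 2 = Hsum p g e f 1 (m + u) α := by
  haveI : Fact (Nat.Prime 2) := ⟨Nat.prime_two⟩
  rw [Hsum_repr hf, Hsum_repr hf, sum_pow_char]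
  apply Finset.sum_congr rfl
  intro i _
  rw [Esum_frob hp hpef he hf hg hα hu hodd]
  apply Esum_congr hp hpef he hf hg
  have hmm : (i + (m + u)) % f % f = (i + (m + u)) % f := Nat.mod_mod_of_dvd _ dvd_rfl
  rw [hmm, addmod u (i+m) f]
  congr 1
  ring


/-- auxiliary union of half the cyclotomic classes -/
def AuxA (p g f e m : ℕ) : Finset (ZMod p) :=
  (Finset.range (f/2)).biUnion (fun i => Dset p g f e ((i + m) % f))

include hp hpef he hf hg in
lemma Hsum_eq_AuxA (m : ℕ) :
    Hsum p g e f 1 m α = ∑ t ∈ AuxA p g f e m, α ^ t.val := by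
  rw [Hsum_repr hf]
  unfold AuxA
  rw [Finset.sum_biUnion]
  · apply Finset.sum_congr rfl
    intro i _
    rfl
  · intro a ha b hb hab
    simp only [Finset.coe_range, Set.mem_Iio] at ha hb
    apply Dset_disjoint hp hpef he hf hg (Nat.mod_lt _ hf) (Nat.mod_lt _ hf)
    intro hEq
    apply hab
    have h1 : (a + m) ≡ (b + m) [MOD f] := hEq
    have h2 : a ≡ b [MOD f] := h1.add_right_cancel' m
    unfold Nat.ModEq at h2
    rw [Nat.mod_eq_of_lt (lt_of_lt_of_le ha (Nat.div_le_self f 2)),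
      Nat.mod_eq_of_lt (lt_of_lt_of_le hb (Nat.div_le_self f 2))] at h2
    exact h2

include hp hpef he hf hg in
lemma AuxA_congr {m m' : ℕ} (hmm : m % f = m' % f) : AuxA p g f e m = AuxA p g f e m' := by
  unfold AuxA
  apply Finset.biUnion_congr rfl
  intro i _
  apply Dset_congr hp hpef he hf hg
  rw [Nat.mod_mod_of_dvd _ dvd_rfl, Nat.mod_mod_of_dvd _ dvd_rfl,
    Nat.add_mod i m f, Nat.add_mod i m' f, hmm]

include hp hpef he hf hg in
lemma AuxA_image (s m : ℕ) :
    AuxA p g f e (s + m) = (AuxA p g f e m).image (fun x => (g : ZMod p) ^ s * x) := by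
  unfold AuxA
  rw [Finset.biUnion_image]
  apply Finset.biUnion_congr rfl
  intro i _
  rw [← Dset_image hp hpef he hf hg]
  apply Dset_congr hp hpef he hf hg
  rw [Nat.mod_mod_of_dvd _ dvd_rfl, addmod s (i+m) f]
  congr 1
  ring

include hp hpef he hf hg in
lemma AuxA_eval (s m : ℕ) :
    ∑ t ∈ AuxA p g f e (s + m), α ^ t.val
      = ∑ t ∈ AuxA p g f e m, α ^ (((g : ZMod p) ^ s * t).val) := by
  haveI : Fact p.Prime := ⟨hp⟩
  rw [AuxA_image hp hpef he hf hg]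
  apply Finset.sum_image
  intro a _ b _ h
  exact mul_left_cancel₀ (pow_ne_zero s (g_ne_zero hp hpef hg)) h

include hp hpef he hf hg in
lemma mem_AuxA_self (m : ℕ) (hf2 : 0 < f / 2) : (g : ZMod p) ^ m ∈ AuxA p g f e m := by
  unfold AuxA
  rw [Finset.mem_biUnion]
  refine ⟨0, Finset.mem_range.mpr hf2, ?_⟩
  apply (mem_Dset_pow hp hpef he hf hg).mpr
  show m % f = (0 + m) % f % f
  rw [Nat.mod_mod_of_dvd _ dvd_rfl, Nat.zero_add]

include hp hpef he hf hg hα in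
lemma Hsum_compl [CharP F 2] (hfe : Even f) (m : ℕ) :
    Hsum p g e f 1 m α + Hsum p g e f 1 (m + f / 2) α = 1 := by
  rw [Hsum_repr hf, Hsum_repr hf]
  have hhalf : f - f / 2 = f / 2 := by
    obtain ⟨c, hc⟩ := hfe; omega
  have h2 : ∑ i ∈ Finset.range (f / 2), Esum p g f e ((i + (m + f / 2)) % f) α
      = ∑ i ∈ Finset.Ico (f / 2) f, Esum p g f e ((i + m) % f) α := by
    rw [Finset.sum_Ico_eq_sum_range, hhalf]
    apply Finset.sum_congr rfl
    intro i _
    congr 1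
    ring
  rw [h2, Finset.sum_range_add_sum_Ico _ (Nat.div_le_self f 2)]
  have himg : (Finset.range f).image (fun i => (i + m) % f) = Finset.range f := by
    apply Finset.eq_of_subset_of_card_le
    · intro x hx
      simp only [Finset.mem_image, Finset.mem_range] at hx ⊢
      obtain ⟨i, _, rfl⟩ := hx
      exact Nat.mod_lt _ hf
    · rw [Finset.card_image_of_injOn, Finset.card_range]
      intro a ha b hb hab
      simp only [Finset.coe_range, Set.mem_Iio] at ha hb
      have : a ≡ b [MOD f] := Nat.ModEq.add_right_cancel' m hab
      unfold Nat.ModEq at this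
      rwa [Nat.mod_eq_of_lt ha, Nat.mod_eq_of_lt hb] at this
  have hinj : ∀ a ∈ Finset.range f, ∀ b ∈ Finset.range f,
      (a + m) % f = (b + m) % f → a = b := by
    intro a ha b hb hab
    have h2 : a ≡ b [MOD f] := Nat.ModEq.add_right_cancel' m hab
    unfold Nat.ModEq at h2
    simp only [Finset.mem_range] at ha hb
    rwa [Nat.mod_eq_of_lt ha, Nat.mod_eq_of_lt hb] at h2
  have htot : ∑ j ∈ Finset.range f, Esum p g f e j α = 1 :=
    total_sum hp hpef he hf hg hα
  rw [← himg, Finset.sum_image hinj] at htot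
  exact htot

include hp hpef he hf hg hα hodd in
lemma key_poly [CharP F 2] (m w : ℕ)
    (hW : ∀ s : ℕ, Hsum p g e f 1 (w + s) α = Hsum p g e f 1 s α) :
    AuxA p g f e m = AuxA p g f e (w + m) := by
  classical
  haveI : Fact p.Prime := ⟨hp⟩
  set Q : Polynomial F := (∑ t ∈ AuxA p g f e m, Polynomial.X ^ t.val)
      + ∑ t ∈ AuxA p g f e (w + m), Polynomial.X ^ t.val with hQdef
  have hp0 : 0 < p := hp.pos
  have hdeg : Q.natDegree < p := by
    have b1 : (∑ t ∈ AuxA p g f e m, (Polynomial.X : Polynomial F) ^ t.val).natDegree ≤ p - 1 :=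
      Polynomial.natDegree_sum_le_of_forall_le _ _ (fun t _ => by
        rw [Polynomial.natDegree_X_pow]
        have := ZMod.val_lt t; omega)
    have b2 : (∑ t ∈ AuxA p g f e (w + m), (Polynomial.X : Polynomial F) ^ t.val).natDegree ≤ p - 1 :=
      Polynomial.natDegree_sum_le_of_forall_le _ _ (fun t _ => by
        rw [Polynomial.natDegree_X_pow]
        have := ZMod.val_lt t; omega)
    have hQn : Q.natDegree ≤ p - 1 := by
      rw [hQdef]
      exact (Polynomial.natDegree_add_le _ _).trans (max_le b1 b2)
    omega
  have hroots : ∀ j ∈ Finset.range p, Q.eval (α ^ j) = 0 := by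
    intro j hj
    rw [Finset.mem_range] at hj
    rw [hQdef]
    simp only [Polynomial.eval_add, Polynomial.eval_finset_sum, Polynomial.eval_pow,
      Polynomial.eval_X]
    by_cases hj0 : j = 0
    · subst hj0
      simp only [pow_zero, one_pow]
      rw [Finset.sum_const, Finset.sum_const]
      have hcard : (AuxA p g f e (w + m)).card = (AuxA p g f e m).card := by
        rw [AuxA_image hp hpef he hf hg]
        exact Finset.card_image_of_injective _
          (fun a b h => mul_left_cancel₀ (pow_ne_zero w (g_ne_zero hp hpef hg)) h)
      rw [hcard]
      exact CharTwo.add_self_eq_zero _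
    · have hjv : ((j : ZMod p)).val = j := ZMod.val_cast_of_lt hj
      have hjne : (j : ZMod p) ≠ 0 := by
        intro h; rw [h, ZMod.val_zero] at hjv; exact hj0 hjv.symm
      obtain ⟨s, hs⟩ := gsurj hp hpef hg _ hjne
      have hterm : ∀ t : ZMod p, (α ^ j) ^ t.val = α ^ (((g : ZMod p) ^ s * t).val) := by
        intro t
        rw [← pow_mul, ← hs, root_pow_val_mul hp hα, hjv]
      rw [Finset.sum_congr rfl (fun t _ => hterm t),
        Finset.sum_congr rfl (fun t _ => hterm t),
        ← AuxA_eval hp hpef he hf hg, ← AuxA_eval hp hpef he hf hg,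
        ← Hsum_eq_AuxA hp hpef he hf hg, ← Hsum_eq_AuxA hp hpef he hf hg]
      have harg : s + (w + m) = w + (s + m) := by ring
      rw [harg, hW (s + m)]
      exact CharTwo.add_self_eq_zero _
  have hQ0 : Q = 0 := by
    by_contra hQ
    have himg : ((Finset.range p).image (α ^ ·)) ⊆ Q.roots.toFinset := by
      intro x hx
      simp only [Finset.mem_image, Finset.mem_range] at hx
      obtain ⟨j, hj, rfl⟩ := hx
      rw [Multiset.mem_toFinset, Polynomial.mem_roots hQ]
      exact hroots j (Finset.mem_range.mpr hj)
    have hcard : ((Finset.range p).image (α ^ ·)).card = p := by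
      rw [Finset.card_image_of_injOn, Finset.card_range]
      intro a ha b hb hab
      simp only [Finset.coe_range, Set.mem_Iio] at ha hb
      exact hα.pow_inj ha hb hab
    have h1 := Finset.card_le_card himg
    have h2 := (Multiset.toFinset_card_le Q.roots).trans (Polynomial.card_roots' Q)
    omega
  ext x
  have hc := congrArg (fun q => Polynomial.coeff q x.val) hQ0
  simp only [hQdef, Polynomial.coeff_add, Polynomial.finset_sum_coeff,
    Polynomial.coeff_X_pow, Polynomial.coeff_zero] at hc
  have hconv : ∀ A : Finset (ZMod p),
      (∑ t ∈ A, if x.val = t.val then (1 : F) else 0) = if x ∈ A then 1 else 0 := by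
    intro A
    have : ∀ t ∈ A, (if x.val = t.val then (1 : F) else 0) = if t = x then 1 else 0 := by
      intro t _
      congr 1
      exact propext ⟨fun h => (ZMod.val_injective p h).symm, fun h => by rw [h]⟩
    rw [Finset.sum_congr rfl this, Finset.sum_ite_eq' A x (fun _ => (1:F))]
  rw [hconv, hconv] at hc
  constructor
  · intro h1
    by_contra h2
    simp only [if_pos h1, if_neg h2, add_zero] at hc
    exact one_ne_zero hc
  · intro h1
    by_contra h2
    simp only [if_pos h1, if_neg h2, zero_add] at hc
    exact one_ne_zero hc


include hp hpef he hf hg hu in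
lemma ord_two_gcd : Nat.gcd ((p - 1) / orderOf (2 : ZMod p)) f = Nat.gcd u f := by
  haveI : Fact p.Prime := ⟨hp⟩
  have hgu : IsUnit (g : ZMod p) := (g_ne_zero hp hpef hg).isUnit
  have hordg : orderOf hgu.unit = e * f := by
    rw [← orderOf_units, hgu.unit_spec, ord_g hp hpef hg]
  have h2 : (2 : ZMod p) = ((hgu.unit ^ u : (ZMod p)ˣ) : ZMod p) := by
    simp [hgu.unit_spec, hu]
  have hord2 : orderOf (2 : ZMod p) = (e * f) / Nat.gcd (e * f) u := by
    rw [h2, orderOf_units, orderOf_pow, hordg]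
  have hef0 : e * f ≠ 0 := Nat.mul_ne_zero he.ne' hf.ne'
  have hdvd : Nat.gcd (e * f) u ∣ e * f := Nat.gcd_dvd_left _ _
  have hp1 : p - 1 = e * f := by omega
  rw [hp1, hord2, Nat.div_div_self hdvd hef0, Nat.gcd_assoc]
  have hdf : Nat.gcd u f ∣ e * f := (Nat.gcd_dvd_right u f).trans (dvd_mul_left f e)
  exact Nat.gcd_eq_right hdf

lemma exists_mul_modEq (u f : ℕ) (hf : 0 < f) : ∃ t : ℕ, t * u ≡ Nat.gcd u f [MOD f] := by
  have hb := Nat.gcd_eq_gcd_ab u f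
  refine ⟨(Nat.gcdA u f % (f : ℤ)).toNat, ?_⟩
  rw [← Int.natCast_modEq_iff]
  push_cast
  have hfz : ((f : ℤ)) ≠ 0 := by exact_mod_cast hf.ne'
  have h1 : (((Nat.gcdA u f % (f : ℤ)).toNat : ℤ)) = Nat.gcdA u f % (f : ℤ) :=
    Int.toNat_of_nonneg (Int.emod_nonneg _ hfz)
  rw [h1]
  calc Nat.gcdA u f % (f : ℤ) * (u : ℤ)
      ≡ Nat.gcdA u f * (u : ℤ) [ZMOD (f : ℤ)] :=
        Int.ModEq.mul_right _ (Int.emod_emod_of_dvd _ dvd_rfl)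
    _ ≡ ((Nat.gcd u f : ℕ) : ℤ) [ZMOD (f : ℤ)] := by
        have hrw : (Nat.gcdA u f) * (u : ℤ)
            = ((Nat.gcd u f : ℕ) : ℤ) + (f : ℤ) * (-(Nat.gcdB u f)) := by
          linarith [hb]
        rw [hrw]
        unfold Int.ModEq
        rw [Int.add_mul_emod_self_left]

end Aux




/-- If `v = f` then `H_k^{(p)}(α_1) + H_{k+u}^{(p)}(α_1) = 0` for all `k`; if `v ∣ f/2`
or `v = 2, v ≠ f`, then `H_k^{(p)}(α_1) + H_{k+u}^{(p)}(α_1) ≠ 0` for all `k`. -/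
theorem stmt15 (p e f g u : ℕ) (hp : p.Prime) (hodd : Odd p) (hpef : p = e * f + 1)
    (he : 0 < e) (hf : 0 < f) (hfe : Even f)
    (hg : orderOf (g : ZMod p) = Nat.totient p)
    (hu : (2 : ZMod p) = (g : ZMod p) ^ u)
    (α : AlgebraicClosure (ZMod 2)) (hα : IsPrimitiveRoot α p) :
    (Nat.gcd ((p - 1) / orderOf (2 : ZMod p)) f = f →
      ∀ k : ℕ, Hsum p g e f 1 k α + Hsum p g e f 1 (k + u) α = 0) ∧
    ((Nat.gcd ((p - 1) / orderOf (2 : ZMod p)) f ∣ f / 2 ∨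
        (Nat.gcd ((p - 1) / orderOf (2 : ZMod p)) f = 2 ∧
          Nat.gcd ((p - 1) / orderOf (2 : ZMod p)) f ≠ f)) →
      ∀ k : ℕ, Hsum p g e f 1 k α + Hsum p g e f 1 (k + u) α ≠ 0) := by
  haveI : Fact p.Prime := ⟨hp⟩
  have hvg : Nat.gcd ((p - 1) / orderOf (2 : ZMod p)) f = Nat.gcd u f :=
    ord_two_gcd hp hpef he hf hg hu
  have hiter : ∀ m : ℕ, Hsum p g e f 1 m α ^ 2 = Hsum p g e f 1 m α →
      ∀ t : ℕ, Hsum p g e f 1 (m + t * u) α = Hsum p g e f 1 m α := by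
    intro m hm t
    induction t with
    | zero => simp
    | succ n ih =>
        have harg : m + (n + 1) * u = (m + n * u) + u := by ring
        rw [harg, ← Hsum_frob hp hpef he hf hg hα hu hodd (m + n * u), ih, hm]
  constructor
  · intro hvf k
    have hguf : Nat.gcd u f = f := by rw [← hvg]; exact hvf
    have hfu : f ∣ u := hguf ▸ Nat.gcd_dvd_left u f
    obtain ⟨c, rfl⟩ := hfu
    have hmm : k % f = (k + f * c) % f := (Nat.add_mul_mod_self_left k f c).symm
    rw [Hsum_congr hp hpef he hf hg hmm]
    exact CharTwo.add_self_eq_zero _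
  · intro hcase k hcon
    have hk2 : Hsum p g e f 1 k α ^ 2 = Hsum p g e f 1 k α := by
      have hfr := Hsum_frob hp hpef he hf hg hα hu hodd k
      rw [← hfr] at hcon
      have : Hsum p g e f 1 k α ^ 2 = -(Hsum p g e f 1 k α) := by linear_combination hcon
      rwa [CharTwo.neg_eq] at this
    have hcase1 : Nat.gcd u f ∣ f / 2 → False := by
      intro hdvd
      obtain ⟨t0, ht0⟩ := exists_mul_modEq u f hf
      obtain ⟨c, hc⟩ := hdvd
      have hmod : (t0 * c) * u ≡ f / 2 [MOD f] := by
        have h2 := ht0.mul_right c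
        have harg : t0 * u * c = (t0 * c) * u := by ring
        rw [harg, ← hc] at h2
        exact h2
      have h1 : Hsum p g e f 1 (k + t0 * c * u) α = Hsum p g e f 1 k α := hiter k hk2 _
      have h2 : Hsum p g e f 1 (k + t0 * c * u) α = Hsum p g e f 1 (k + f / 2) α :=
        Hsum_congr hp hpef he hf hg (Nat.ModEq.add_left k hmod)
      have h3 := Hsum_compl hp hpef he hf hg hα hfe k
      rw [← h2, h1, CharTwo.add_self_eq_zero] at h3
      exact zero_ne_one h3
    rcases hcase with hdvd | ⟨hv2, hvne⟩
    · exact hcase1 (hvg ▸ hdvd)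
    · have hguf : Nat.gcd u f = 2 := by rw [← hvg]; exact hv2
      by_cases hd2 : Nat.gcd u f ∣ f / 2
      · exact hcase1 hd2
      · have hfne2 : f ≠ 2 := fun h => hvne (by rw [hv2, h])
        have hfeven : f % 2 = 0 := by
          obtain ⟨c, hcc⟩ := hfe; omega
        have hf4 : 4 ≤ f := by omega
        have hodd2 : f / 2 % 2 = 1 := by
          rw [hguf] at hd2
          omega
        obtain ⟨t0, ht0⟩ := exists_mul_modEq u f hf
        rw [hguf] at ht0
        have hstep : ∀ c' : ℕ, Hsum p g e f 1 (k + 2 * c') α = Hsum p g e f 1 k α := by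
          intro c'
          have hmod : (t0 * c') * u ≡ 2 * c' [MOD f] := by
            have h2 := ht0.mul_right c'
            have harg : t0 * u * c' = (t0 * c') * u := by ring
            rwa [harg] at h2
          exact (Hsum_congr hp hpef he hf hg
            (Nat.ModEq.add_left k hmod).symm).trans (hiter k hk2 _)
        have hsq : ∀ m : ℕ, Hsum p g e f 1 m α ^ 2 = Hsum p g e f 1 m α := by
          intro m
          have hM : Hsum p g e f 1 m α = Hsum p g e f 1 (m + f * (k + 1)) α :=
            Hsum_congr hp hpef he hf hg (Nat.add_mul_mod_self_left m f (k + 1)).symm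
          have hMk : k ≤ m + f * (k + 1) := by
            have : k + 1 ≤ f * (k + 1) := Nat.le_mul_of_pos_left _ hf
            omega
          by_cases hpar : (m + f * (k + 1)) % 2 = k % 2
          · obtain ⟨c', hc'⟩ : ∃ c', m + f * (k + 1) = k + 2 * c' := by
              refine ⟨(m + f * (k + 1) - k) / 2, ?_⟩
              omega
            rw [hM, hc', hstep c']
            exact hk2
          · obtain ⟨c', hc'⟩ : ∃ c', m + f * (k + 1) + f / 2 = k + 2 * c' := by
              refine ⟨(m + f * (k + 1) + f / 2 - k) / 2, ?_⟩
              omega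
            have hcompl := Hsum_compl hp hpef he hf hg hα hfe (m + f * (k + 1))
            have hval : Hsum p g e f 1 (m + f * (k + 1) + f / 2) α = Hsum p g e f 1 k α := by
              rw [hc']; exact hstep c'
            rw [hval] at hcompl
            have hMval : Hsum p g e f 1 (m + f * (k + 1)) α = 1 + Hsum p g e f 1 k α := by
              calc Hsum p g e f 1 (m + f * (k + 1)) α
                  = Hsum p g e f 1 (m + f * (k + 1)) α
                    + (Hsum p g e f 1 k α + Hsum p g e f 1 k α) := by
                      rw [CharTwo.add_self_eq_zero, add_zero]
                _ = (Hsum p g e f 1 (m + f * (k + 1)) α + Hsum p g e f 1 k α)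
                    + Hsum p g e f 1 k α := by ring
                _ = 1 + Hsum p g e f 1 k α := by rw [hcompl]
            rw [hM, hMval]
            haveI : Fact (Nat.Prime 2) := ⟨Nat.prime_two⟩
            rw [add_pow_char, one_pow, hk2]
        have hW : ∀ s : ℕ, Hsum p g e f 1 (t0 * u + s) α = Hsum p g e f 1 s α := by
          intro s
          have harg : t0 * u + s = s + t0 * u := by ring
          rw [harg]
          exact hiter s (hsq s) t0
        have hAeq := key_poly hp hpef he hf hg hα hodd k (t0 * u) hW
        have hmem : (g : ZMod p) ^ k ∈ AuxA p g f e (t0 * u + k) :=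
          hAeq ▸ mem_AuxA_self hp hpef he hf hg k (by omega)
        unfold AuxA at hmem
        rw [Finset.mem_biUnion] at hmem
        obtain ⟨i, hi, hmemD⟩ := hmem
        rw [Finset.mem_range] at hi
        have hMod : k ≡ (i + (t0 * u + k)) % f [MOD f] :=
          (mem_Dset_pow hp hpef he hf hg).mp hmemD
        have hMod2 : k ≡ i + (t0 * u + k) [MOD f] := hMod.trans (Nat.mod_modEq _ f)
        have hMod3 : 0 + k ≡ (i + t0 * u) + k [MOD f] := by
          have harg : i + (t0 * u + k) = (i + t0 * u) + k := by ring
          rw [harg] at hMod2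
          simpa using hMod2
        have hMod4 : 0 ≡ i + t0 * u [MOD f] := hMod3.add_right_cancel' k
        have hMod5 : 0 ≡ i + 2 [MOD f] := hMod4.trans (ht0.add_left i)
        have hdvd2 : f ∣ i + 2 := (Nat.modEq_zero_iff_dvd).mp hMod5.symm
        have hle := Nat.le_of_dvd (by omega) hdvd2
        omega
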